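/- (Fréchet–Shohat) Let (μ_n) be probability measures on ℝ all having finite moments of all orders, such that M_k := lim_n ∫ x^k dμ_n exists for every k ∈ ℕ. If μ is a determinate probability measure with moments ∫ x^k dμ = M_k for all k, then μ_n converges weakly to μ. -/

import Mathlib

open MeasureTheory Filter Topology Set

/-- Chebyshev tail bound, left tail. -/
lemma cheb_left (m : Measure ℝ) [IsProbabilityMeasure m]
    (hi : Integrable (fun x => x^2) m) {C : ℝ} (hC : ∫ x, x^2 ∂m ≤ C) {q : ℝ} (hq : q < 0) :
    (m (Iic q)).toReal ≤ C / q^2 := by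
  have key := mul_meas_ge_le_integral_of_nonneg (μ := m)
    (f := fun x => x^2) (Eventually.of_forall fun x => sq_nonneg x) hi (q^2)
  have hsub : Iic q ⊆ {x : ℝ | q^2 ≤ x^2} := by
    intro x hx
    simp only [mem_setOf_eq]
    have hx' : x ≤ q := hx
    nlinarith
  have hmono : (m (Iic q)).toReal ≤ (m {x : ℝ | q^2 ≤ x^2}).toReal :=
    ENNReal.toReal_mono (measure_ne_top m _) (measure_mono hsub)
  have hq2 : (0:ℝ) < q^2 := by nlinarith
  rw [le_div_iff₀ hq2]
  calc (m (Iic q)).toReal * q^2 ≤ (m {x : ℝ | q^2 ≤ x^2}).toReal * q^2 := by nlinarith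
    _ = q^2 * (m {x : ℝ | q^2 ≤ x^2}).toReal := mul_comm _ _
    _ ≤ ∫ x, x^2 ∂m := key
    _ ≤ C := hC

/-- Chebyshev tail bound, right tail. -/
lemma cheb_right (m : Measure ℝ) [IsProbabilityMeasure m]
    (hi : Integrable (fun x => x^2) m) {C : ℝ} (hC : ∫ x, x^2 ∂m ≤ C) {q : ℝ} (hq : 0 < q) :
    1 - (m (Iic q)).toReal ≤ C / q^2 := by
  have key := mul_meas_ge_le_integral_of_nonneg (μ := m)
    (f := fun x => x^2) (Eventually.of_forall fun x => sq_nonneg x) hi (q^2)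
  have hsub : Ioi q ⊆ {x : ℝ | q^2 ≤ x^2} := by
    intro x hx
    simp only [mem_setOf_eq]
    have hx' : q < x := hx
    nlinarith
  have hmono : (m (Ioi q)).toReal ≤ (m {x : ℝ | q^2 ≤ x^2}).toReal :=
    ENNReal.toReal_mono (measure_ne_top m _) (measure_mono hsub)
  have hcompl : (m (Iic q)).toReal + (m (Ioi q)).toReal = 1 := by
    have := measure_add_measure_compl (μ := m) (measurableSet_Iic (a := q))
    rw [compl_Iic] at this
    have h1 : (m (Iic q)) ≠ ⊤ := measure_ne_top m _
    have h2 : (m (Ioi q)) ≠ ⊤ := measure_ne_top m _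
    have := congrArg ENNReal.toReal this
    rwa [ENNReal.toReal_add h1 h2, measure_univ, ENNReal.toReal_one] at this
  have hq2 : (0:ℝ) < q^2 := by nlinarith
  rw [le_div_iff₀ hq2]
  have : (m (Ioi q)).toReal * q^2 ≤ C := by
    calc (m (Ioi q)).toReal * q^2 ≤ (m {x : ℝ | q^2 ≤ x^2}).toReal * q^2 := by nlinarith
      _ = q^2 * _ := mul_comm _ _
      _ ≤ ∫ x, x^2 ∂m := key
      _ ≤ C := hC
  nlinarith

/-- From a monotone `[0,1]`-valued function on rationals with Chebyshev-type tails, construct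
a probability measure whose CDF is approximated by `g` at all but countably many points. -/
lemma exists_limit_measure (g : ℚ → ℝ) (gmono : Monotone g)
    (g0 : ∀ q, 0 ≤ g q) (g1 : ∀ q, g q ≤ 1)
    {C : ℝ} (hC0 : 0 ≤ C)
    (gle : ∀ q : ℚ, (q:ℝ) < 0 → g q ≤ C / (q:ℝ)^2)
    (gge : ∀ q : ℚ, 0 < (q:ℝ) → 1 - C / (q:ℝ)^2 ≤ g q) :
    ∃ ν : Measure ℝ, IsProbabilityMeasure ν ∧ ∃ D : Set ℝ, D.Countable ∧ ∀ x, x ∉ D →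
      ((∀ ε > 0, ∃ q : ℚ, x < (q:ℝ) ∧ g q < (ν (Iic x)).toReal + ε) ∧
       (∀ ε > 0, ∃ p : ℚ, (p:ℝ) < x ∧ (ν (Iic x)).toReal - ε < g p)) := by
  classical
  set S : ℝ → Set ℝ := fun x => (fun q : ℚ => g q) '' {q : ℚ | x < (q:ℝ)} with hS
  have Sne : ∀ x, (S x).Nonempty := by
    intro x
    obtain ⟨q, hq⟩ := exists_rat_gt x
    exact ⟨g q, ⟨q, hq, rfl⟩⟩
  have Sbdd : ∀ x, BddBelow (S x) := by
    intro x
    exact ⟨0, fun b ⟨q, _, hq⟩ => hq ▸ g0 q⟩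
  set h : ℝ → ℝ := fun x => sInf (S x) with hh
  have h_le : ∀ (x : ℝ) (q : ℚ), x < (q:ℝ) → h x ≤ g q := by
    intro x q hq
    exact csInf_le (Sbdd x) ⟨q, hq, rfl⟩
  have le_h : ∀ (x : ℝ) (p : ℚ), (p:ℝ) ≤ x → g p ≤ h x := by
    intro x p hp
    refine le_csInf (Sne x) ?_
    rintro b ⟨q, hq, rfl⟩
    exact gmono (by exact_mod_cast le_of_lt (lt_of_le_of_lt hp hq))
  have h0 : ∀ x, 0 ≤ h x := fun x => le_csInf (Sne x) (by rintro b ⟨q, _, rfl⟩; exact g0 q)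
  have h1 : ∀ x, h x ≤ 1 := by
    intro x
    obtain ⟨q, hq⟩ := exists_rat_gt x
    exact (h_le x q hq).trans (g1 q)
  have hmono : Monotone h := by
    intro x y hxy
    refine csInf_le_csInf (Sbdd x) (Sne y) ?_
    rintro b ⟨q, hq, rfl⟩
    exact ⟨q, lt_of_le_of_lt hxy hq, rfl⟩
  set F : StieltjesFunction ℝ := hmono.stieltjesFunction with hF
  have Feq : ∀ x, F x = h x := by
    intro x
    have hrl : F x = sInf (h '' Ioi x) := by
      rw [hF, hmono.stieltjesFunction_eq, hmono.rightLim_eq_sInf (x := x)]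
    rw [hrl]
    have hbdd : BddBelow (h '' Ioi x) := ⟨0, by rintro b ⟨y, _, rfl⟩; exact h0 y⟩
    have hne : (h '' Ioi x).Nonempty := ⟨h (x+1), ⟨x+1, by simp, rfl⟩⟩
    apply le_antisymm
    · -- sInf (h '' Ioi x) ≤ h x = sInf (S x)
      refine le_csInf (Sne x) ?_
      rintro b ⟨q, hq, rfl⟩
      obtain ⟨y, hy1, hy2⟩ := exists_between (show x < (q:ℝ) from hq)
      exact (csInf_le hbdd ⟨y, hy1, rfl⟩).trans (h_le y q hy2)
    · refine le_csInf hne ?_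
      rintro b ⟨y, hy, rfl⟩
      exact hmono (le_of_lt hy)
  -- tail at -∞
  have tendsto_bot : Tendsto F atBot (𝓝 0) := by
    have hb : ∀ x : ℝ, x ≤ -2 → F x ≤ C / (x+1)^2 := by
      intro x hx
      obtain ⟨q, hq1, hq2⟩ := exists_rat_btwn (show x < x + 1 by linarith)
      have hqneg : (q:ℝ) < 0 := by linarith
      have h2 : (x+1)^2 ≤ (q:ℝ)^2 := by nlinarith
      have h3 : C / (q:ℝ)^2 ≤ C / (x+1)^2 := by
        apply div_le_div_of_nonneg_left hC0 (by nlinarith) h2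
      calc F x = h x := Feq x
        _ ≤ g q := h_le x q hq1
        _ ≤ C / (q:ℝ)^2 := gle q hqneg
        _ ≤ C / (x+1)^2 := h3
    have htend : Tendsto (fun x : ℝ => C / (x+1)^2) atBot (𝓝 0) := by
      apply Tendsto.div_atTop (tendsto_const_nhds)
      have h1 : Tendsto (fun x : ℝ => x + 1) atBot atBot := tendsto_atBot_add_const_right _ 1 tendsto_id
      have h2 : Tendsto (fun x : ℝ => |x + 1|) atBot atTop := tendsto_abs_atBot_atTop.comp h1
      have h3 : Tendsto (fun x : ℝ => |x + 1| ^ 2) atBot atTop :=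
        (tendsto_pow_atTop (two_ne_zero)).comp h2
      refine h3.congr fun x => by rw [sq_abs]
    refine tendsto_of_tendsto_of_tendsto_of_le_of_le' tendsto_const_nhds htend ?_ ?_
    · exact Eventually.of_forall fun x => (Feq x) ▸ h0 x
    · filter_upwards [eventually_le_atBot (-2 : ℝ)] with x hx using hb x hx
  -- tail at +∞
  have tendsto_top : Tendsto F atTop (𝓝 1) := by
    have hb : ∀ x : ℝ, 2 ≤ x → 1 - C / (x-1)^2 ≤ F x := by
      intro x hx
      obtain ⟨p, hp1, hp2⟩ := exists_rat_btwn (show x - 1 < x by linarith)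
      have hppos : 0 < (p:ℝ) := by linarith
      have h2 : (x-1)^2 ≤ (p:ℝ)^2 := by nlinarith
      have h3 : C / (p:ℝ)^2 ≤ C / (x-1)^2 := by
        apply div_le_div_of_nonneg_left hC0 (by nlinarith) h2
      calc 1 - C / (x-1)^2 ≤ 1 - C / (p:ℝ)^2 := by linarith
        _ ≤ g p := gge p hppos
        _ ≤ h x := le_h x p (le_of_lt hp2)
        _ = F x := (Feq x).symm
    have htend : Tendsto (fun x : ℝ => 1 - C / (x-1)^2) atTop (𝓝 1) := by
      have : Tendsto (fun x : ℝ => C / (x-1)^2) atTop (𝓝 0) := by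
        apply Tendsto.div_atTop (tendsto_const_nhds)
        have h1 : Tendsto (fun x : ℝ => x - 1) atTop atTop := tendsto_atTop_add_const_right _ (-1) tendsto_id
        have h3 : Tendsto (fun x : ℝ => (x - 1) ^ 2) atTop atTop :=
          (tendsto_pow_atTop (two_ne_zero)).comp h1
        exact h3
      have := tendsto_const_nhds (x := (1:ℝ)) (f := atTop (α := ℝ)) |>.sub this
      simpa using this
    refine tendsto_of_tendsto_of_tendsto_of_le_of_le' htend tendsto_const_nhds ?_ ?_
    · filter_upwards [eventually_ge_atTop (2 : ℝ)] with x hx using hb x hx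
    · exact Eventually.of_forall fun x => (Feq x) ▸ h1 x
  refine ⟨F.measure, F.isProbabilityMeasure tendsto_bot tendsto_top, ?_⟩
  have hIic : ∀ x, (F.measure (Iic x)).toReal = F x := by
    intro x
    rw [F.measure_Iic tendsto_bot x]
    simp only [sub_zero]
    rw [ENNReal.toReal_ofReal ((Feq x) ▸ h0 x)]
  refine ⟨{x | Function.leftLim F x ≠ F x}, F.countable_leftLim_ne, ?_⟩
  intro x hx
  rw [Set.mem_setOf_eq, not_not] at hx
  constructor
  · intro ε hε
    rw [hIic, Feq]
    -- h x = sInf (S x), so ∃ q with g q < h x + ε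
    obtain ⟨b, hb, hblt⟩ := exists_lt_of_csInf_lt (Sne x) (show sInf (S x) < h x + ε by rw [hh]; linarith)
    obtain ⟨q, hq, rfl⟩ := hb
    exact ⟨q, hq, hblt⟩
  · intro ε hε
    rw [hIic]
    -- leftLim F x = F x; leftLim = sSup (F '' Iio x)
    have hll : Function.leftLim F x = sSup (F '' Iio x) :=
      F.mono.leftLim_eq_sSup (x := x)
    have hFx : sSup (F '' Iio x) = F x := by rw [← hll, hx]
    have hne : (F '' Iio x).Nonempty := ⟨F (x-1), ⟨x-1, by simp, rfl⟩⟩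
    have : F x - ε < sSup (F '' Iio x) := by rw [hFx]; linarith
    obtain ⟨b, hb, hblt⟩ := exists_lt_of_lt_csSup hne this
    obtain ⟨y, hy, rfl⟩ := hb
    obtain ⟨p, hp1, hp2⟩ := exists_rat_btwn (show y < x from hy)
    refine ⟨p, hp2, ?_⟩
    calc F x - ε < F y := hblt
      _ = h y := Feq y
      _ ≤ g p := h_le y p hp1

section FS
variable (ρ : ℕ → Measure ℝ) (ν : Measure ℝ)

/-- Good point: CDFs converge there. -/
def FSGood (x : ℝ) : Prop :=
  Tendsto (fun j => (ρ j (Iic x)).toReal) atTop (𝓝 ((ν (Iic x)).toReal))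

variable [∀ j, IsProbabilityMeasure (ρ j)] [IsProbabilityMeasure ν]
set_option linter.unusedSectionVars false

lemma fs_conv_at (g : ℚ → ℝ)
    (hg : ∀ q : ℚ, Tendsto (fun j => (ρ j (Iic (q:ℝ))).toReal) atTop (𝓝 (g q)))
    (x : ℝ)
    (hup : ∀ ε > 0, ∃ q : ℚ, x < (q:ℝ) ∧ g q < (ν (Iic x)).toReal + ε)
    (hlo : ∀ ε > 0, ∃ p : ℚ, (p:ℝ) < x ∧ (ν (Iic x)).toReal - ε < g p) :
    FSGood ρ ν x := by
  rw [FSGood, Metric.tendsto_atTop]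
  intro ε hε
  obtain ⟨q, hq1, hq2⟩ := hup (ε/2) (by linarith)
  obtain ⟨p, hp1, hp2⟩ := hlo (ε/2) (by linarith)
  have h1 : ∀ᶠ j in atTop, (ρ j (Iic (q:ℝ))).toReal < g q + ε/2 := by
    have := (hg q).eventually (eventually_lt_nhds (show g q < g q + ε/2 by linarith))
    exact this
  have h2 : ∀ᶠ j in atTop, g p - ε/2 < (ρ j (Iic (p:ℝ))).toReal := by
    exact (hg p).eventually (eventually_gt_nhds (show g p - ε/2 < g p by linarith))
  obtain ⟨N, hN⟩ := (h1.and h2).exists_forall_of_atTop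
  refine ⟨N, fun j hj => ?_⟩
  obtain ⟨hj1, hj2⟩ := hN j hj
  have hmq : (ρ j (Iic x)).toReal ≤ (ρ j (Iic (q:ℝ))).toReal :=
    ENNReal.toReal_mono (measure_ne_top _ _) (measure_mono (Iic_subset_Iic.2 (le_of_lt hq1)))
  have hmp : (ρ j (Iic (p:ℝ))).toReal ≤ (ρ j (Iic x)).toReal :=
    ENNReal.toReal_mono (measure_ne_top _ _) (measure_mono (Iic_subset_Iic.2 (le_of_lt hp1)))
  rw [Real.dist_eq, abs_lt]
  constructor
  · -- -ε < cdf_j x - F x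
    have : (ν (Iic x)).toReal - ε < (ρ j (Iic x)).toReal := by
      calc (ν (Iic x)).toReal - ε < g p - ε/2 := by linarith
        _ < (ρ j (Iic (p:ℝ))).toReal := hj2
        _ ≤ (ρ j (Iic x)).toReal := hmp
    linarith
  · have : (ρ j (Iic x)).toReal < (ν (Iic x)).toReal + ε := by
      calc (ρ j (Iic x)).toReal ≤ (ρ j (Iic (q:ℝ))).toReal := hmq
        _ < g q + ε/2 := hj1
        _ < (ν (Iic x)).toReal + ε := by linarith
    linarith

/-- Union of a list of half-open intervals. -/
def FSU (l : List (ℝ × ℝ)) : Set ℝ := l.foldr (fun p s => Ioc p.1 p.2 ∪ s) ∅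

lemma FSU_nil : FSU [] = ∅ := rfl

lemma FSU_cons (p : ℝ × ℝ) (l : List (ℝ × ℝ)) : FSU (p :: l) = Ioc p.1 p.2 ∪ FSU l := rfl

lemma FSU_measurable (l : List (ℝ × ℝ)) : MeasurableSet (FSU l) := by
  induction l with
  | nil => exact MeasurableSet.empty
  | cons p l ih => exact (measurableSet_Ioc).union ih

lemma FSU_mem_subset {p : ℝ × ℝ} {l : List (ℝ × ℝ)} (hp : p ∈ l) : Ioc p.1 p.2 ⊆ FSU l := by
  induction l with
  | nil => simp at hp
  | cons q l ih =>
    rcases List.mem_cons.1 hp with h | h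
    · subst h; rw [FSU_cons]; exact subset_union_left
    · rw [FSU_cons]; exact (ih h).trans subset_union_right

lemma FSU_inter (l : List (ℝ × ℝ)) (c d : ℝ) :
    FSU l ∩ Ioc c d = FSU (l.map fun p => (p.1 ⊔ c, p.2 ⊓ d)) := by
  induction l with
  | nil => simp [FSU_nil]
  | cons p l ih =>
    rw [List.map_cons, FSU_cons, FSU_cons, union_inter_distrib_right, ih, Ioc_inter_Ioc]

/-- For a probability measure, measure of `Ioc` via CDF values. -/
lemma fs_Ioc_toReal (m : Measure ℝ) [IsProbabilityMeasure m] {a b : ℝ} (hab : a ≤ b) :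
    (m (Ioc a b)).toReal = (m (Iic b)).toReal - (m (Iic a)).toReal := by
  have hd : Iic b \ Iic a = Ioc a b := Iic_sdiff_Iic
  have hsub : Iic a ⊆ Iic b := Iic_subset_Iic.2 hab
  rw [← hd, measure_diff hsub measurableSet_Iic.nullMeasurableSet (measure_ne_top _ _),
    ENNReal.toReal_sub_of_le (measure_mono hsub) (measure_ne_top _ _)]

lemma fs_tendsto_Ioc {a b : ℝ} (ha : FSGood ρ ν a) (hb : FSGood ρ ν b) :
    Tendsto (fun j => (ρ j (Ioc a b)).toReal) atTop (𝓝 ((ν (Ioc a b)).toReal)) := by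
  rcases le_or_gt a b with hab | hab
  · have : ∀ j, (ρ j (Ioc a b)).toReal = (ρ j (Iic b)).toReal - (ρ j (Iic a)).toReal :=
      fun j => fs_Ioc_toReal (ρ j) hab
    rw [fs_Ioc_toReal ν hab]
    exact (funext this : _) ▸ (hb.sub ha)
  · rw [Ioc_eq_empty (not_lt.2 hab.le)]
    simp only [measure_empty, ENNReal.toReal_zero]
    exact tendsto_const_nhds

lemma fs_union_add_inter (m : Measure ℝ) [IsProbabilityMeasure m] (A B : Set ℝ)
    (hB : MeasurableSet B) :
    (m (A ∪ B)).toReal = (m A).toReal + (m B).toReal - (m (A ∩ B)).toReal := by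
  have h := measure_union_add_inter (μ := m) A hB
  have := congrArg ENNReal.toReal h
  rw [ENNReal.toReal_add (measure_ne_top _ _) (measure_ne_top _ _),
    ENNReal.toReal_add (measure_ne_top _ _) (measure_ne_top _ _)] at this
  linarith

lemma fs_tendsto_FSU : ∀ (n : ℕ) (l : List (ℝ × ℝ)), l.length ≤ n →
    (∀ p ∈ l, FSGood ρ ν p.1 ∧ FSGood ρ ν p.2) →
    Tendsto (fun j => (ρ j (FSU l)).toReal) atTop (𝓝 ((ν (FSU l)).toReal)) := by
  intro n
  induction n with
  | zero =>
    intro l hl _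
    rw [Nat.le_zero, List.length_eq_zero_iff] at hl
    subst hl
    simp only [FSU_nil, measure_empty, ENNReal.toReal_zero]
    exact tendsto_const_nhds
  | succ n ih =>
    intro l hl hgood
    match l with
    | [] =>
      simp only [FSU_nil, measure_empty, ENNReal.toReal_zero]
      exact tendsto_const_nhds
    | p :: t =>
      have hlen : t.length ≤ n := by simpa using hl
      have hgt : ∀ q ∈ t, FSGood ρ ν q.1 ∧ FSGood ρ ν q.2 :=
        fun q hq => hgood q (List.mem_cons_of_mem _ hq)
      have hgp := hgood p (List.mem_cons_self)
      -- intersection list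
      set t' := t.map (fun q => (q.1 ⊔ p.1, q.2 ⊓ p.2)) with ht'
      have ht'len : t'.length ≤ n := by simpa [ht'] using hlen
      have ht'good : ∀ q ∈ t', FSGood ρ ν q.1 ∧ FSGood ρ ν q.2 := by
        intro q hq
        rw [ht', List.mem_map] at hq
        obtain ⟨r, hr, rfl⟩ := hq
        obtain ⟨hr1, hr2⟩ := hgt r hr
        constructor
        · rcases le_total r.1 p.1 with h | h
          · simp only [sup_eq_right.2 h]; exact hgp.1
          · simp only [sup_eq_left.2 h]; exact hr1
        · rcases le_total r.2 p.2 with h | h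
          · simp only [inf_eq_left.2 h]; exact hr2
          · simp only [inf_eq_right.2 h]; exact hgp.2
      have hIoc := fs_tendsto_Ioc ρ ν hgp.1 hgp.2
      have hU := ih t hlen hgt
      have hI := ih t' ht'len ht'good
      have hkey : ∀ (m : Measure ℝ) [IsProbabilityMeasure m],
          (m (FSU (p :: t))).toReal
            = (m (Ioc p.1 p.2)).toReal + (m (FSU t)).toReal - (m (FSU t')).toReal := by
        intro m hm
        rw [FSU_cons, fs_union_add_inter m _ _ (FSU_measurable t)]
        congr 1
        rw [inter_comm, FSU_inter]
      have : ∀ j, (ρ j (FSU (p :: t))).toReal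
          = (ρ j (Ioc p.1 p.2)).toReal + (ρ j (FSU t)).toReal - (ρ j (FSU t')).toReal :=
        fun j => hkey (ρ j)
      rw [funext this, hkey ν]
      exact (hIoc.add hU).sub hI

end FS

lemma FSU_subset {l : List (ℝ × ℝ)} {W : Set ℝ} (h : ∀ p ∈ l, Ioc p.1 p.2 ⊆ W) :
    FSU l ⊆ W := by
  induction l with
  | nil => exact empty_subset W
  | cons p t ih =>
    refine union_subset (h p (List.mem_cons_self)) (ih fun q hq => h q (List.mem_cons_of_mem _ hq))

lemma fs_open_liminf (ρ : ℕ → Measure ℝ) (ν : Measure ℝ)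
    [∀ j, IsProbabilityMeasure (ρ j)] [IsProbabilityMeasure ν]
    (hdense : Dense {x | FSGood ρ ν x})
    (hfsu : ∀ l : List (ℝ × ℝ), (∀ p ∈ l, FSGood ρ ν p.1 ∧ FSGood ρ ν p.2) →
      Tendsto (fun j => (ρ j (FSU l)).toReal) atTop (𝓝 ((ν (FSU l)).toReal)))
    (G : Set ℝ) (hG : IsOpen G) (r : ℝ) (hr : r < (ν G).toReal) :
    ∀ᶠ j in atTop, r < (ρ j G).toReal := by
  set ε : ℝ := (ν G).toReal - r with hε
  have hε0 : 0 < ε := by linarith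
  obtain ⟨K, hKG, hKcomp, hKm⟩ := hG.measurableSet.exists_isCompact_lt_add
    (measure_ne_top ν G) (ε := ENNReal.ofReal (ε/2)) (by simp [ENNReal.ofReal_eq_zero]; linarith)
  have hKr : r < (ν K).toReal := by
    have h1 : (ν G).toReal < (ν K).toReal + ε/2 := by
      have h2 : (ν G).toReal < (ν K + ENNReal.ofReal (ε/2)).toReal := by
        apply (ENNReal.toReal_lt_toReal (measure_ne_top _ _) _).2 hKm
        exact ENNReal.add_ne_top.2 ⟨measure_ne_top _ _, ENNReal.ofReal_ne_top⟩
      rwa [ENNReal.toReal_add (measure_ne_top _ _) ENNReal.ofReal_ne_top,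
        ENNReal.toReal_ofReal (by linarith)] at h2
    linarith
  -- choose good endpoints around each point of K
  have hchoice : ∀ x ∈ K, ∃ a b : ℝ, FSGood ρ ν a ∧ FSGood ρ ν b ∧ a < x ∧ x < b ∧
      Ioc a b ⊆ G := by
    intro x hx
    obtain ⟨δ, hδ0, hball⟩ := Metric.isOpen_iff.1 hG x (hKG hx)
    obtain ⟨a, ha, haG⟩ := hdense.exists_mem_open isOpen_Ioo
      (nonempty_Ioo.2 (show x - δ < x by linarith))
    obtain ⟨b, hb, hbG⟩ := hdense.exists_mem_open isOpen_Ioo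
      (nonempty_Ioo.2 (show x < x + δ by linarith))
    refine ⟨a, b, ha, hb, haG.2, hbG.1, ?_⟩
    intro z hz
    apply hball
    rw [Metric.mem_ball, Real.dist_eq, abs_lt]
    constructor
    · have := haG.1; have := hz.1; linarith
    · have := hbG.2; have := hz.2; linarith
  classical
  choose! a b hga hgb hax hxb hIG using hchoice
  obtain ⟨t, ht⟩ := hKcomp.elim_finite_subcover (fun i : K => Ioo (a i.1) (b i.1))
    (fun i => isOpen_Ioo) (by
      intro x hx
      exact mem_iUnion.2 ⟨⟨x, hx⟩, hax x hx, hxb x hx⟩)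
  set l : List (ℝ × ℝ) := t.toList.map (fun i => (a i.1, b i.1)) with hl
  have hgood : ∀ p ∈ l, FSGood ρ ν p.1 ∧ FSGood ρ ν p.2 := by
    intro p hp
    rw [hl, List.mem_map] at hp
    obtain ⟨i, _, rfl⟩ := hp
    exact ⟨hga i.1 i.2, hgb i.1 i.2⟩
  have hKU : K ⊆ FSU l := by
    intro x hx
    obtain ⟨i, hit, hxi⟩ := mem_iUnion₂.1 (ht hx)
    have hmem : ((a i.1, b i.1) : ℝ × ℝ) ∈ l := by
      rw [hl, List.mem_map]
      exact ⟨i, Finset.mem_toList.2 hit, rfl⟩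
    exact FSU_mem_subset hmem (Ioo_subset_Ioc_self hxi)
  have hUG : FSU l ⊆ G := by
    refine FSU_subset ?_
    intro p hp
    rw [hl, List.mem_map] at hp
    obtain ⟨i, _, rfl⟩ := hp
    exact hIG i.1 i.2
  have hrU : r < (ν (FSU l)).toReal :=
    lt_of_lt_of_le hKr (ENNReal.toReal_mono (measure_ne_top _ _) (measure_mono hKU))
  have := (hfsu l hgood).eventually (eventually_gt_nhds hrU)
  filter_upwards [this] with j hj
  exact lt_of_lt_of_le hj (ENNReal.toReal_mono (measure_ne_top _ _) (measure_mono hUG))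

/-- Core: subsequence with weak limit. -/
lemma fs_core (ρ : ℕ → Measure ℝ) (hp : ∀ j, IsProbabilityMeasure (ρ j))
    (hi : ∀ j, Integrable (fun x => x^2) (ρ j)) {C : ℝ} (hC : ∀ j, ∫ x, x^2 ∂(ρ j) ≤ C) :
    ∃ (ψ : ℕ → ℕ) (ν : Measure ℝ), StrictMono ψ ∧ IsProbabilityMeasure ν ∧
      ∀ f : BoundedContinuousFunction ℝ ℝ,
        Tendsto (fun j => ∫ x, f x ∂(ρ (ψ j))) atTop (𝓝 (∫ x, f x ∂ν)) := by
  classical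
  haveI := hp
  have hC0 : 0 ≤ C := le_trans (integral_nonneg fun x => sq_nonneg x) (hC 0)
  have hle1 : ∀ j (s : Set ℝ), (ρ j s).toReal ≤ 1 := by
    intro j s
    have h := prob_le_one (μ := ρ j) (s := s)
    have := ENNReal.toReal_mono (by simp) h
    simpa using this
  set u : ℕ → (ℚ → Icc (0:ℝ) 1) := fun j q =>
    ⟨(ρ j (Iic (q:ℝ))).toReal, ⟨ENNReal.toReal_nonneg, hle1 j _⟩⟩ with hu
  obtain ⟨G, ψ, hψ, hconv⟩ := SeqCompactSpace.tendsto_subseq u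
  set g : ℚ → ℝ := fun q => (G q : ℝ) with hgdef
  have hg : ∀ q : ℚ, Tendsto (fun j => (ρ (ψ j) (Iic (q:ℝ))).toReal) atTop (𝓝 (g q)) := by
    intro q
    have := tendsto_pi_nhds.1 hconv q
    exact (continuous_subtype_val.tendsto _).comp this
  have gmono : Monotone g := by
    intro q r hqr
    refine le_of_tendsto_of_tendsto' (hg q) (hg r) fun j => ?_
    exact ENNReal.toReal_mono (measure_ne_top _ _)
      (measure_mono (Iic_subset_Iic.2 (by exact_mod_cast hqr)))
  have g0 : ∀ q, 0 ≤ g q := fun q => (G q).2.1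
  have g1 : ∀ q, g q ≤ 1 := fun q => (G q).2.2
  have gle : ∀ q : ℚ, (q:ℝ) < 0 → g q ≤ C / (q:ℝ)^2 := by
    intro q hq
    refine le_of_tendsto (hg q) (Eventually.of_forall fun j => ?_)
    exact cheb_left (ρ (ψ j)) (hi _) (hC _) hq
  have gge : ∀ q : ℚ, 0 < (q:ℝ) → 1 - C / (q:ℝ)^2 ≤ g q := by
    intro q hq
    refine ge_of_tendsto (hg q) (Eventually.of_forall fun j => ?_)
    have := cheb_right (ρ (ψ j)) (hi _) (hC _) hq
    linarith
  obtain ⟨ν, hν, D, hDc, hD⟩ := exists_limit_measure g gmono g0 g1 hC0 gle gge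
  haveI := hν
  set ρ' : ℕ → Measure ℝ := fun j => ρ (ψ j) with hρ'
  haveI : ∀ j, IsProbabilityMeasure (ρ' j) := fun j => hp (ψ j)
  have hGoodSup : Dᶜ ⊆ {x | FSGood ρ' ν x} := by
    intro x hx
    exact fs_conv_at ρ' ν g hg x (hD x hx).1 (hD x hx).2
  have hdense : Dense {x | FSGood ρ' ν x} :=
    Dense.mono hGoodSup (hDc.dense_compl ℝ)
  have hfsu : ∀ l : List (ℝ × ℝ), (∀ p ∈ l, FSGood ρ' ν p.1 ∧ FSGood ρ' ν p.2) →
      Tendsto (fun j => (ρ' j (FSU l)).toReal) atTop (𝓝 ((ν (FSU l)).toReal)) :=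
    fun l hl => fs_tendsto_FSU ρ' ν l.length l le_rfl hl
  -- probability measure versions
  set Pν : ProbabilityMeasure ℝ := ⟨ν, hν⟩ with hPν
  set Pρ : ℕ → ProbabilityMeasure ℝ := fun j => ⟨ρ' j, by infer_instance⟩ with hPρ
  have h_opens : ∀ G', IsOpen G' → Pν G' ≤ atTop.liminf (fun j => Pρ j G') := by
    intro G' hG'
    have hcob : atTop.IsCoboundedUnder (· ≥ ·) (fun j => Pρ j G') :=
      (Filter.isBoundedUnder_of ⟨1, fun j => by
        simpa using (Pρ j).apply_le_one G'⟩).isCoboundedUnder_ge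
    have hbdd : atTop.IsBoundedUnder (· ≥ ·) (fun j => Pρ j G') :=
      Filter.isBoundedUnder_of ⟨0, fun j => zero_le⟩
    rw [Filter.le_liminf_iff hcob hbdd]
    intro y hy
    have hyr : (y : ℝ) < (ν G').toReal := by
      have h1 : (Pν G' : ℝ) = (ν G').toReal := by
        rw [hPν]; rfl
      rw [← h1]
      exact_mod_cast hy
    have := fs_open_liminf ρ' ν hdense hfsu G' hG' (y : ℝ) hyr
    filter_upwards [this] with j hj
    have h2 : (Pρ j G' : ℝ) = (ρ' j G').toReal := rfl
    rw [← NNReal.coe_lt_coe, h2]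
    exact hj
  have hweak : Tendsto Pρ atTop (𝓝 Pν) := tendsto_of_forall_isOpen_le_liminf h_opens
  refine ⟨ψ, ν, hψ, hν, ?_⟩
  intro f
  have := ProbabilityMeasure.tendsto_iff_forall_integral_tendsto.1 hweak f
  exact this

/-- (Fréchet–Shohat) Let `(μ_n)` be probability measures on `ℝ` all having finite moments
of all orders, such that `M_k := lim_n ∫ x^k dμ_n` exists for every `k`. If `μ` is a
determinate probability measure with moments `∫ x^k dμ = M_k` for all `k`, then `μ_n`
converges weakly to `μ`. -/
theorem frechet_shohat
    (μn : ℕ → Measure ℝ) (hprob : ∀ n, IsProbabilityMeasure (μn n))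
    (hint : ∀ n, ∀ k : ℕ, Integrable (fun x => x ^ k) (μn n))
    (M : ℕ → ℝ)
    (hlim : ∀ k : ℕ, Tendsto (fun n => ∫ x, x ^ k ∂(μn n)) atTop (𝓝 (M k)))
    (μ : Measure ℝ) (hμ : IsProbabilityMeasure μ)
    (hμint : ∀ k : ℕ, Integrable (fun x => x ^ k) μ)
    (hμmom : ∀ k : ℕ, ∫ x, x ^ k ∂μ = M k)
    (hdet : ∀ ν : Measure ℝ, IsProbabilityMeasure ν →
      (∀ k : ℕ, Integrable (fun x => x ^ k) ν) →
      (∀ k : ℕ, ∫ x, x ^ k ∂ν = M k) → ν = μ) :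
    ∀ f : ℝ → ℝ, Continuous f → (∃ K : ℝ, ∀ x, |f x| ≤ K) →
      Tendsto (fun n => ∫ x, f x ∂(μn n)) atTop (𝓝 (∫ x, f x ∂μ)) := by
  classical
  -- uniform moment bounds
  have hDex : ∀ k : ℕ, ∃ Dk : ℝ, ∀ n, ∫ x, x ^ k ∂(μn n) ≤ Dk := by
    intro k
    obtain ⟨Dk, hDk⟩ := (hlim k).bddAbove_range
    exact ⟨Dk, fun n => hDk (Set.mem_range_self n)⟩
  choose D hD using hDex
  have hDnonneg : ∀ k : ℕ, 0 ≤ D (2 * k) := by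
    intro k
    refine le_trans ?_ (hD (2*k) 0)
    apply integral_nonneg
    intro x
    show (0:ℝ) ≤ x ^ (2 * k)
    rw [pow_mul]
    positivity
  intro f hf hbdd
  obtain ⟨K, hK⟩ := hbdd
  apply tendsto_of_subseq_tendsto
  intro ns hns
  set ρ : ℕ → Measure ℝ := fun j => μn (ns j) with hρ
  haveI : ∀ j, IsProbabilityMeasure (ρ j) := fun j => hprob (ns j)
  have hi2 : ∀ j, Integrable (fun x => x^2) (ρ j) := fun j => hint (ns j) 2
  obtain ⟨ψ, ν, hψ, hν, hweak⟩ := fs_core ρ (fun j => hprob (ns j)) hi2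
    (C := D 2) (fun j => hD 2 (ns j))
  haveI := hν
  refine ⟨ψ, ?_⟩
  -- the subsubsequence of measures
  set σ : ℕ → Measure ℝ := fun j => ρ (ψ j) with hσ
  haveI : ∀ j, IsProbabilityMeasure (σ j) := fun j => hprob (ns (ψ j))
  have hsub : Tendsto (fun j => ns (ψ j)) atTop atTop := hns.comp hψ.tendsto_atTop
  have hmomlim : ∀ k : ℕ, Tendsto (fun j => ∫ x, x ^ k ∂(σ j)) atTop (𝓝 (M k)) :=
    fun k => (hlim k).comp hsub
  -- moments of ν
  have hkey : ∀ k : ℕ, Integrable (fun x => x ^ k) ν ∧ ∫ x, x ^ k ∂ν = M k := by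
    intro k
    set w : ℝ → ℝ := fun x => x ^ (2 * k) with hw
    have hwnn : ∀ x, 0 ≤ w x := by intro x; rw [hw]; simp only; rw [pow_mul]; positivity
    have hwcont : Continuous w := continuous_pow _
    have hwk : ∀ x : ℝ, |x ^ k| ≤ 1 + w x := by
      intro x
      rcases le_or_gt (|x ^ k|) 1 with h | h
      · linarith [hwnn x]
      · have h2 : |x ^ k| ≤ |x ^ k| ^ 2 := by nlinarith [abs_nonneg (x ^ k)]
        have h3 : |x ^ k| ^ 2 = w x := by
          show |x ^ k| ^ 2 = x ^ (2 * k)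
          rw [sq_abs, ← pow_mul, mul_comm k 2]
        nlinarith [hwnn x]
    have hwint : ∀ j, Integrable w (σ j) := fun j => hint (ns (ψ j)) (2*k)
    have hwD : ∀ j, ∫ x, w x ∂(σ j) ≤ D (2*k) := fun j => hD (2*k) (ns (ψ j))
    -- truncations min(w, R)
    have hbR : ∀ R : ℕ, ∃ b : BoundedContinuousFunction ℝ ℝ, (∀ x, b x = min (w x) R) := by
      intro R
      refine ⟨BoundedContinuousFunction.ofNormedAddCommGroup (fun x => min (w x) R)
        (hwcont.min continuous_const) R ?_, fun x => rfl⟩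
      intro x
      rw [Real.norm_eq_abs, abs_le]
      constructor
      · have := hwnn x; have : (0:ℝ) ≤ min (w x) R := le_min this (Nat.cast_nonneg R)
        linarith [Nat.cast_nonneg (α := ℝ) R]
      · exact min_le_right _ _
    choose bR hbR using hbR
    -- ∫ bR dν ≤ D (2k)
    have hbRν : ∀ R : ℕ, ∫ x, bR R x ∂ν ≤ D (2*k) := by
      intro R
      have hconv := hweak (bR R)
      refine le_of_tendsto hconv (Eventually.of_forall fun j => ?_)
      calc ∫ x, bR R x ∂(σ j) ≤ ∫ x, w x ∂(σ j) := by
            apply integral_mono ((bR R).integrable _) (hwint j)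
            intro x
            rw [hbR R x]
            exact min_le_left _ _
        _ ≤ D (2*k) := hwD j
    -- lintegral bound for w under ν
    have hlint : ∫⁻ x, ENNReal.ofReal (w x) ∂ν ≤ ENNReal.ofReal (D (2*k)) := by
      have hmono : Monotone fun (R : ℕ) => fun x => ENNReal.ofReal (min (w x) R) := by
        intro R S hRS x
        apply ENNReal.ofReal_le_ofReal
        exact min_le_min le_rfl (by exact_mod_cast hRS)
      have hsup : ∀ x, ⨆ R : ℕ, ENNReal.ofReal (min (w x) R) = ENNReal.ofReal (w x) := by
        intro x
        apply le_antisymm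
        · exact iSup_le fun R => ENNReal.ofReal_le_ofReal (min_le_left _ _)
        · have : ENNReal.ofReal (w x) = ENNReal.ofReal (min (w x) (⌈w x⌉₊)) := by
            rw [min_eq_left (Nat.le_ceil _)]
          rw [this]
          exact le_iSup (fun R : ℕ => ENNReal.ofReal (min (w x) R)) ⌈w x⌉₊
      have hMCT := lintegral_iSup (μ := ν)
        (f := fun R x => ENNReal.ofReal (min (w x) R))
        (fun R => (hwcont.min continuous_const).measurable.ennreal_ofReal)
        (fun R S hRS => hmono hRS)
      have heq : ∫⁻ x, ENNReal.ofReal (w x) ∂ν = ⨆ R : ℕ, ∫⁻ x, ENNReal.ofReal (min (w x) R) ∂ν := by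
        rw [← hMCT]
        apply lintegral_congr
        intro x
        exact (hsup x).symm
      rw [heq]
      refine iSup_le fun R => ?_
      have hle : ∫⁻ x, ENNReal.ofReal (min (w x) R) ∂ν = ENNReal.ofReal (∫ x, bR R x ∂ν) := by
        rw [ofReal_integral_eq_lintegral_ofReal ((bR R).integrable ν)
          (Eventually.of_forall fun x => by rw [hbR R x]; exact le_min (hwnn x) (Nat.cast_nonneg R))]
        apply lintegral_congr
        intro x
        rw [hbR R x]
      rw [hle]
      exact ENNReal.ofReal_le_ofReal (hbRν R)
    -- integrability of w and x^k under ν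
    have hwintν : Integrable w ν := by
      refine ⟨hwcont.aestronglyMeasurable, ?_⟩
      rw [hasFiniteIntegral_iff_norm]
      have : ∀ x, ENNReal.ofReal ‖w x‖ = ENNReal.ofReal (w x) := by
        intro x; rw [Real.norm_eq_abs, abs_of_nonneg (hwnn x)]
      calc ∫⁻ x, ENNReal.ofReal ‖w x‖ ∂ν = ∫⁻ x, ENNReal.ofReal (w x) ∂ν := by
            apply lintegral_congr; intro x; exact this x
        _ ≤ ENNReal.ofReal (D (2*k)) := hlint
        _ < ⊤ := ENNReal.ofReal_lt_top
    have hkintν : Integrable (fun x => x ^ k) ν := by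
      refine Integrable.mono (hwintν.add (integrable_const 1)) ?_ ?_
      · exact (continuous_pow k).aestronglyMeasurable
      · refine Eventually.of_forall fun x => ?_
        rw [Real.norm_eq_abs, Real.norm_eq_abs]
        have := hwk x
        have h2 : 1 + w x ≤ |w x + 1| := by
          rw [abs_of_nonneg (by linarith [hwnn x])]; linarith
        calc |x ^ k| ≤ 1 + w x := this
          _ ≤ |w x + 1| := h2
    have hwνD : ∫ x, w x ∂ν ≤ D (2*k) := by
      have h1 : ∫ x, w x ∂ν = (∫⁻ x, ENNReal.ofReal (w x) ∂ν).toReal := by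
        rw [integral_eq_lintegral_of_nonneg_ae (Eventually.of_forall hwnn)
          hwcont.aestronglyMeasurable]
      rw [h1]
      calc (∫⁻ x, ENNReal.ofReal (w x) ∂ν).toReal ≤ (ENNReal.ofReal (D (2*k))).toReal :=
            ENNReal.toReal_mono ENNReal.ofReal_ne_top hlint
        _ = D (2*k) := ENNReal.toReal_ofReal (hDnonneg k)
    -- moment identity via truncation of x^k
    have hmom : ∫ x, x ^ k ∂ν = M k := by
      by_contra hne
      set A : ℝ := |∫ x, x ^ k ∂ν - M k| with hA
      have hA0 : 0 < A := abs_pos.2 (sub_ne_zero.2 hne)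
      -- choose R with D(2k)/R < A/4
      obtain ⟨R, hR⟩ := exists_nat_gt (max 1 (4 * D (2*k) / A))
      have hR1 : (1:ℝ) ≤ R := le_trans (le_max_left _ _) hR.le
      have hR0 : (0:ℝ) < R := by linarith
      have hRD : D (2*k) / R < A / 4 := by
        have h2 : 4 * D (2*k) / A < R := lt_of_le_of_lt (le_max_right _ _) hR
        rw [div_lt_div_iff₀ hR0 (by linarith : (0:ℝ) < 4)]
        rw [div_lt_iff₀ hA0] at h2
        nlinarith
      -- truncation
      set φ : ℝ → ℝ := fun x => max (-(R:ℝ)) (min R (x ^ k)) with hφ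
      have hφcont : Continuous φ := continuous_const.max (continuous_const.min (continuous_pow k))
      have hφb : ∀ x, |φ x| ≤ R := by
        intro x
        rw [abs_le]
        refine ⟨le_max_left _ _, max_le (by linarith) (min_le_left _ _)⟩
      have hφdiff : ∀ x, |x ^ k - φ x| ≤ w x / R := by
        intro x
        rcases le_or_gt (|x ^ k|) R with h | h
        · have : φ x = x ^ k := by
            rw [hφ]
            simp only
            rw [abs_le] at h
            rw [min_eq_right h.2, max_eq_right h.1]
          rw [this, sub_self, abs_zero]
          exact div_nonneg (hwnn x) hR0.le
        · have hwx : R * |x ^ k| ≤ w x := by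
            have : |x ^ k| * |x ^ k| = w x := by
              rw [← abs_mul, ← pow_add, abs_of_nonneg]
              · rw [hw]; congr 1; ring
              · rw [← two_mul, pow_mul]; positivity
            nlinarith [abs_nonneg (x ^ k)]
          have hd : |x ^ k - φ x| ≤ |x ^ k| := by
            rcases le_total (x ^ k) 0 with hs | hs
            · -- x^k ≤ 0, |x^k| > R so x^k < -R, φ x = -R
              have hxk : x ^ k < -(R:ℝ) := by
                rw [abs_of_nonpos hs] at h; linarith
              have : φ x = -(R:ℝ) := by
                rw [hφ]; simp only
                rw [max_eq_left]
                exact le_trans (min_le_right _ _) (by linarith)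
              rw [this, abs_of_nonpos (by linarith), abs_of_nonpos hs]
              linarith
            · have hxk : (R:ℝ) < x ^ k := by
                rw [abs_of_nonneg hs] at h; linarith
              have : φ x = (R:ℝ) := by
                rw [hφ]; simp only
                rw [min_eq_left hxk.le, max_eq_right (by linarith)]
              rw [this, abs_of_nonneg (by linarith), abs_of_nonneg hs]
              linarith
          calc |x ^ k - φ x| ≤ |x ^ k| := hd
            _ ≤ w x / R := by rw [le_div_iff₀ hR0]; nlinarith
      -- BCF for φ
      set φb : BoundedContinuousFunction ℝ ℝ :=
        BoundedContinuousFunction.ofNormedAddCommGroup φ hφcont R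
          (fun x => by rw [Real.norm_eq_abs]; exact hφb x) with hφbdef
      have hφbeq : ∀ x, φb x = φ x := fun x => rfl
      have hφint : ∀ (m : Measure ℝ) [IsProbabilityMeasure m], Integrable φ m := by
        intro m hm
        have := φb.integrable m
        apply this.congr
        exact Eventually.of_forall fun x => (hφbeq x)
      -- error bounds
      have herr : ∀ j, |∫ x, x ^ k ∂(σ j) - ∫ x, φ x ∂(σ j)| ≤ D (2*k) / R := by
        intro j
        have hik : Integrable (fun x => x ^ k) (σ j) := hint (ns (ψ j)) k
        rw [← integral_sub hik (hφint (σ j))]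
        calc |∫ x, (x ^ k - φ x) ∂(σ j)| ≤ ∫ x, |x ^ k - φ x| ∂(σ j) := by
              simpa [Real.norm_eq_abs] using
                norm_integral_le_integral_norm (μ := σ j) (f := fun x => x ^ k - φ x)
          _ ≤ ∫ x, w x / R ∂(σ j) := by
              apply integral_mono (hik.sub (hφint (σ j))).abs ((hwint j).div_const R)
              intro x
              exact hφdiff x
          _ = (∫ x, w x ∂(σ j)) / R := by rw [integral_div]
          _ ≤ D (2*k) / R := div_le_div_of_nonneg_right (hwD j) hR0.le
      have herrν : |∫ x, x ^ k ∂ν - ∫ x, φ x ∂ν| ≤ D (2*k) / R := by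
        rw [← integral_sub hkintν (hφint ν)]
        calc |∫ x, (x ^ k - φ x) ∂ν| ≤ ∫ x, |x ^ k - φ x| ∂ν := by
              simpa [Real.norm_eq_abs] using
                norm_integral_le_integral_norm (μ := ν) (f := fun x => x ^ k - φ x)
          _ ≤ ∫ x, w x / R ∂ν := by
              apply integral_mono (hkintν.sub (hφint ν)).abs (hwintν.div_const R)
              intro x
              exact hφdiff x
          _ = (∫ x, w x ∂ν) / R := by rw [integral_div]
          _ ≤ D (2*k) / R := div_le_div_of_nonneg_right hwνD hR0.le
      -- convergence of truncated integrals
      have hφconv : Tendsto (fun j => ∫ x, φ x ∂(σ j)) atTop (𝓝 (∫ x, φ x ∂ν)) := by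
        have := hweak φb
        have heq1 : ∀ j, ∫ x, φb x ∂(σ j) = ∫ x, φ x ∂(σ j) := fun j => rfl
        have heq2 : ∫ x, φb x ∂ν = ∫ x, φ x ∂ν := rfl
        rw [heq2] at this
        exact this.congr fun j => (heq1 j)
      -- put together
      have hev1 := (hmomlim k).eventually
        (Metric.ball_mem_nhds (M k) (show 0 < A/4 by linarith))
      have hev2 := hφconv.eventually
        (Metric.ball_mem_nhds _ (show 0 < A/4 by linarith))
      obtain ⟨j, hj1, hj2⟩ := (hev1.and hev2).exists
      rw [Real.dist_eq] at hj1 hj2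
      have : A < A := by
        calc A = |∫ x, x ^ k ∂ν - M k| := rfl
          _ ≤ |∫ x, x ^ k ∂ν - ∫ x, φ x ∂ν| + |∫ x, φ x ∂ν - ∫ x, φ x ∂(σ j)|
              + |∫ x, φ x ∂(σ j) - ∫ x, x ^ k ∂(σ j)| + |∫ x, x ^ k ∂(σ j) - M k| := by
              have := abs_sub_le (∫ x, x ^ k ∂ν) (∫ x, φ x ∂ν) (M k)
              have h2 := abs_sub_le (∫ x, φ x ∂ν) (∫ x, φ x ∂(σ j)) (M k)
              have h3 := abs_sub_le (∫ x, φ x ∂(σ j)) (∫ x, x ^ k ∂(σ j)) (M k)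
              linarith
          _ < A/4 + A/4 + A/4 + A/4 := by
              have e1 : |∫ x, x ^ k ∂ν - ∫ x, φ x ∂ν| < A/4 := lt_of_le_of_lt herrν hRD
              have e2 : |∫ x, φ x ∂ν - ∫ x, φ x ∂(σ j)| < A/4 := by
                rw [abs_sub_comm]; exact hj2
              have e3 : |∫ x, φ x ∂(σ j) - ∫ x, x ^ k ∂(σ j)| < A/4 := by
                rw [abs_sub_comm]; exact lt_of_le_of_lt (herr j) hRD
              have e4 : |∫ x, x ^ k ∂(σ j) - M k| < A/4 := hj1
              linarith
          _ = A := by ring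
      exact lt_irrefl A this
    exact ⟨hkintν, hmom⟩
  -- apply determinacy
  have hνμ : ν = μ := hdet ν hν (fun k => (hkey k).1) (fun k => (hkey k).2)
  -- conclude
  set fb : BoundedContinuousFunction ℝ ℝ :=
    BoundedContinuousFunction.ofNormedAddCommGroup f hf K
      (fun x => by rw [Real.norm_eq_abs]; exact hK x) with hfb
  have := hweak fb
  rw [hνμ] at this
  exact this
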